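/- If p ≥ 1/3, then for all x in (0, π/2), (1−p)·(sin x)/x + p·(tan x)/x > 1. -/

import Mathlib

open Real Set

lemma huygens_aux : ∀ x : ℝ, 0 < x → x < Real.pi / 2 →
    3 * x < 2 * Real.sin x + Real.tan x := by
  intro x hx hx2
  set f : ℝ → ℝ := fun y => 2 * Real.sin y + Real.tan y - 3 * y with hf
  have hcos : ∀ y ∈ Ico (0:ℝ) (π/2), 0 < Real.cos y := by
    intro y hy
    exact Real.cos_pos_of_mem_Ioo ⟨lt_of_lt_of_le (by linarith [Real.pi_pos]) hy.1, hy.2⟩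
  have hcont : ContinuousOn f (Ico 0 (π/2)) := by
    intro y hy
    have ht := Real.continuousAt_tan.2 (ne_of_gt (hcos y hy))
    have : ContinuousAt f y :=
      ((continuousAt_const.mul Real.continuous_sin.continuousAt).add ht).sub
        (continuousAt_const.mul continuousAt_id)
    exact this.continuousWithinAt
  have hmono : StrictMonoOn f (Ico 0 (π/2)) := by
    apply strictMonoOn_of_deriv_pos (convex_Ico _ _) hcont
    intro y hy
    rw [interior_Ico] at hy
    have hc : 0 < Real.cos y := Real.cos_pos_of_mem_Ioo ⟨by linarith [hy.1, Real.pi_pos], hy.2⟩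
    have hd : HasDerivAt f (2 * Real.cos y + 1 / Real.cos y ^ 2 - 3) y := by
      have h1 := (Real.hasDerivAt_sin y).const_mul 2
      have h2 := Real.hasDerivAt_tan (ne_of_gt hc)
      have h3 := (hasDerivAt_id y).const_mul 3
      have h := (h1.add h2).sub h3
      rw [mul_one] at h
      exact h
    rw [hd.deriv]
    have hs : 0 < Real.sin y := Real.sin_pos_of_pos_of_lt_pi hy.1 (by linarith [Real.pi_pos, hy.2])
    have hsq := Real.sin_sq_add_cos_sq y
    have hc1 : Real.cos y < 1 := by nlinarith
    have h4 : 3 - 2 * Real.cos y < 1 / Real.cos y ^ 2 := by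
      rw [lt_div_iff₀ (by positivity)]
      nlinarith [mul_pos (mul_pos (sub_pos.2 hc1) (sub_pos.2 hc1))
        (show (0:ℝ) < 2 * Real.cos y + 1 by linarith)]
    linarith
  have h0 : (0:ℝ) ∈ Ico (0:ℝ) (π/2) := ⟨le_refl 0, by linarith [Real.pi_pos]⟩
  have hxm : x ∈ Ico (0:ℝ) (π/2) := ⟨le_of_lt hx, hx2⟩
  have := hmono h0 hxm hx
  simp only [hf, Real.sin_zero, Real.tan_zero] at this
  linarith

theorem weighted_huygens_circular_lower (p : ℝ) (hp : p ≥ 1/3) :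
    ∀ x : ℝ, 0 < x → x < Real.pi / 2 →
      (1 - p) * (Real.sin x / x) + p * (Real.tan x / x) > 1 := by
  intro x hx hx2
  have h1 := huygens_aux x hx hx2
  have hc : 0 < Real.cos x :=
    Real.cos_pos_of_mem_Ioo ⟨by linarith [Real.pi_pos], hx2⟩
  have hs : 0 < Real.sin x := Real.sin_pos_of_pos_of_lt_pi hx (by linarith [Real.pi_pos])
  have hc1 : Real.cos x ≤ 1 := Real.cos_le_one x
  have h2 : Real.sin x ≤ Real.tan x := by
    rw [Real.tan_eq_sin_div_cos, le_div_iff₀ hc]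
    nlinarith
  have hgoal : x < (1 - p) * Real.sin x + p * Real.tan x := by nlinarith
  have : (1 - p) * (Real.sin x / x) + p * (Real.tan x / x)
      = ((1 - p) * Real.sin x + p * Real.tan x) / x := by ring
  rw [this, gt_iff_lt, lt_div_iff₀ hx]
  linarith
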